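/- Suppose the dynamical system (X,T,μ) satisfies the polynomial concentration inequality with moment q ≥ 2 and constant C_q > 0. Let f : X → ℝ be Lipschitz with ∫ f dμ = 0, and set a_f = Lip(f)·‖f‖_∞. Then for every k ≥ 0, every n ≥ 1, and every t > 0, μ({x : |CÔV_n(k)(x) − Cov(k)| > t}) ≤ C_q (2 a_f / t)^q ((n + k) / n²)^{q/2}. -/

import Mathlib

open MeasureTheory Real

noncomputable section

/-- `K` is separately Lipschitz in each of its `n` variables, with
`L j` a Lipschitz constant for the `j`-th variable. -/
def SepLip {E : Type*} [PseudoMetricSpace E] {n : ℕ}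
    (K : (Fin n → E) → ℝ) (L : Fin n → ℝ) : Prop :=
  ∀ (x : Fin n → E) (j : Fin n) (y : E),
    |K x - K (Function.update x j y)| ≤ L j * dist (x j) y

/-- The kernel used for the autocovariance estimator. -/
def covK {E : Type*} (g : E → ℝ) (n k : ℕ) (x : Fin (n + k) → E) : ℝ :=
  (n : ℝ)⁻¹ * ∑ i : Fin n,
    g (x ⟨i.1, i.2.trans_le (Nat.le_add_right n k)⟩)
      * g (x ⟨i.1 + k, Nat.add_lt_add_right i.2 k⟩)

theorem exists_ext {E : Type*} [MetricSpace E] [MeasurableSpace E] [BorelSpace E]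
    (X : Set E) (f : E → ℝ) (Lf Mf : ℝ) (hLf : 0 ≤ Lf) (hMf : 0 ≤ Mf)
    (hfLip : ∀ x ∈ X, ∀ y ∈ X, |f x - f y| ≤ Lf * dist x y)
    (hfBdd : ∀ x ∈ X, |f x| ≤ Mf) :
    ∃ g : E → ℝ, Measurable g ∧ (∀ x y, |g x - g y| ≤ Lf * dist x y)
      ∧ (∀ x ∈ X, g x = f x) ∧ (∀ x, |g x| ≤ Mf) := by
  have hLip : LipschitzOnWith (NNReal.mk Lf hLf) f X := by
    rw [lipschitzOnWith_iff_dist_le_mul]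
    intro x hx y hy
    rw [Real.dist_eq]
    exact hfLip x hx y hy
  obtain ⟨g0, hg0Lip, hg0eq⟩ := hLip.extend_real
  refine ⟨fun x => max (-Mf) (min (g0 x) Mf), ?_, ?_, ?_, ?_⟩
  · exact (measurable_const.max ((hg0Lip.continuous.measurable).min measurable_const))
      |>.comp measurable_id |>.mono le_rfl le_rfl |>.mono le_rfl le_rfl
  · intro x y
    calc |max (-Mf) (min (g0 x) Mf) - max (-Mf) (min (g0 y) Mf)|
        ≤ |min (g0 x) Mf - min (g0 y) Mf| := by
          rw [max_comm (-Mf) _, max_comm (-Mf) _]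
          exact abs_max_sub_max_le_abs _ _ _
      _ ≤ |g0 x - g0 y| := by
          have := abs_min_sub_min_le_max (g0 x) Mf (g0 y) Mf
          simpa using this
      _ ≤ Lf * dist x y := by
          have := hg0Lip.dist_le_mul x y
          rw [Real.dist_eq] at this
          simpa using this
  · intro x hx
    have h1 : g0 x = f x := (hg0eq hx).symm
    have h2 := hfBdd x hx
    rw [abs_le] at h2
    simp only []
    rw [h1, min_eq_left h2.2, max_eq_right h2.1]
  · intro x
    rw [abs_le]
    constructor
    · exact le_max_left _ _
    · exact max_le (by linarith) (min_le_right _ _)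


theorem sepLip_covK {E : Type*} [PseudoMetricSpace E]
    (g : E → ℝ) (Lf Mf : ℝ) (hLf : 0 ≤ Lf) (hMf : 0 ≤ Mf)
    (hgLip : ∀ x y, |g x - g y| ≤ Lf * dist x y) (hgBdd : ∀ x, |g x| ≤ Mf)
    (n k : ℕ) :
    SepLip (covK g n k) (fun _ => 2 * (Lf * Mf) / n) := by
  intro x j y
  set u := Function.update x j y with hu
  set D := dist (x j) y with hD
  have hD0 : 0 ≤ D := dist_nonneg
  set h : Fin (n + k) → ℝ := fun m => dist (x m) (u m) with hh
  have hh0 : ∀ m, 0 ≤ h m := fun m => dist_nonneg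
  have hsum : ∑ m : Fin (n + k), h m = D := by
    rw [Finset.sum_eq_single j]
    · simp [hh, hu, hD, Function.update_self]
    · intro m _ hm
      simp [hh, hu, Function.update_of_ne hm]
    · simp
  have key : ∀ e : Fin n → Fin (n + k), Function.Injective e →
      ∑ i : Fin n, h (e i) ≤ D := by
    intro e he
    have h1 : ∑ m ∈ Finset.univ.image e, h m = ∑ i : Fin n, h (e i) :=
      Finset.sum_image (fun a _ b _ hab => he hab)
    calc ∑ i : Fin n, h (e i) = ∑ m ∈ Finset.univ.image e, h m := h1.symm
      _ ≤ ∑ m : Fin (n + k), h m :=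
          Finset.sum_le_sum_of_subset_of_nonneg (Finset.subset_univ _)
            (fun m _ _ => hh0 m)
      _ = D := hsum
  set a : Fin n → Fin (n + k) :=
    fun i => ⟨i.1, i.2.trans_le (Nat.le_add_right n k)⟩ with ha
  set b : Fin n → Fin (n + k) :=
    fun i => ⟨i.1 + k, Nat.add_lt_add_right i.2 k⟩ with hb
  have hainj : Function.Injective a := by
    intro i1 i2 hi
    ext
    simpa [ha] using congrArg Fin.val hi
  have hbinj : Function.Injective b := by
    intro i1 i2 hi
    have := congrArg Fin.val hi
    simp only [hb] at this
    ext
    omega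
  have hterm : ∀ (A B : Fin (n + k)),
      |g (x A) * g (x B) - g (u A) * g (u B)| ≤ Lf * Mf * (h A + h B) := by
    intro A B
    have e1 : g (x A) * g (x B) - g (u A) * g (u B)
        = (g (x A) - g (u A)) * g (x B) + g (u A) * (g (x B) - g (u B)) := by ring
    rw [e1]
    calc |(g (x A) - g (u A)) * g (x B) + g (u A) * (g (x B) - g (u B))|
        ≤ |(g (x A) - g (u A)) * g (x B)| + |g (u A) * (g (x B) - g (u B))| :=
          abs_add_le _ _
      _ = |g (x A) - g (u A)| * |g (x B)| + |g (u A)| * |g (x B) - g (u B)| := by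
          rw [abs_mul, abs_mul]
      _ ≤ (Lf * h A) * Mf + Mf * (Lf * h B) := by
          refine add_le_add
            (mul_le_mul (hgLip _ _) (hgBdd _) (abs_nonneg _) (by positivity))
            (mul_le_mul (hgBdd _) (hgLip _ _) (abs_nonneg _) hMf)
      _ = Lf * Mf * (h A + h B) := by ring
  have hexp : ∀ v : Fin (n + k) → E,
      covK g n k v = (n : ℝ)⁻¹ * ∑ i : Fin n, g (v (a i)) * g (v (b i)) :=
    fun v => rfl
  have hn0 : (0 : ℝ) ≤ (n : ℝ)⁻¹ := by positivity
  calc |covK g n k x - covK g n k u|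
      = (n : ℝ)⁻¹ * |∑ i : Fin n, (g (x (a i)) * g (x (b i)) - g (u (a i)) * g (u (b i)))| := by
        rw [hexp, hexp, ← mul_sub, ← Finset.sum_sub_distrib, abs_mul, abs_inv, Nat.abs_cast]
    _ ≤ (n : ℝ)⁻¹ * ∑ i : Fin n, |g (x (a i)) * g (x (b i)) - g (u (a i)) * g (u (b i))| :=
        mul_le_mul_of_nonneg_left (Finset.abs_sum_le_sum_abs _ _) hn0
    _ ≤ (n : ℝ)⁻¹ * ∑ i : Fin n, Lf * Mf * (h (a i) + h (b i)) :=
        mul_le_mul_of_nonneg_left (Finset.sum_le_sum fun i _ => hterm (a i) (b i)) hn0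
    _ = (n : ℝ)⁻¹ * (Lf * Mf) * ((∑ i : Fin n, h (a i)) + ∑ i : Fin n, h (b i)) := by
        rw [← Finset.sum_add_distrib, ← Finset.mul_sum]
        ring
    _ ≤ (n : ℝ)⁻¹ * (Lf * Mf) * (D + D) := by
        refine mul_le_mul_of_nonneg_left (add_le_add (key a hainj) (key b hbinj)) (by positivity)
    _ = 2 * (Lf * Mf) / n * D := by ring

/-- Deviation bound for the empirical estimator of the auto-covariance function of a
Lipschitz observable `f` (with Lipschitz constant `Lf` and sup norm bound `Mf` on `X`,
`a_f = Lf * Mf`), for a system satisfying the polynomial concentration inequality: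
`μ(|Côv_n(k) - Cov(k)| > t) ≤ C_q (2 a_f / t)^q ((n+k)/n²)^{q/2}`. -/
theorem autocovariance_deviation_polynomial {d : ℕ}
    (X : Set (EuclideanSpace ℝ (Fin d))) (hX : IsCompact X)
    (T : EuclideanSpace ℝ (Fin d) → EuclideanSpace ℝ (Fin d))
    (hT : Measurable T) (hTX : Set.MapsTo T X X)
    (μ : Measure (EuclideanSpace ℝ (Fin d))) [IsProbabilityMeasure μ]
    (hμX : μ X = 1) (hinv : μ.map T = μ)
    (q : ℝ) (hq : 2 ≤ q) (Cq : ℝ) (hCq : 0 < Cq)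
    (hconc : ∀ (n : ℕ), 1 ≤ n → ∀ (K : (Fin n → EuclideanSpace ℝ (Fin d)) → ℝ)
      (L : Fin n → ℝ), SepLip K L →
      ∫ x, |K (fun i => T^[(i : ℕ)] x)
          - ∫ z, K (fun i => T^[(i : ℕ)] z) ∂μ| ^ q ∂μ
        ≤ Cq * (∑ j, L j ^ 2) ^ (q / 2))
    (f : EuclideanSpace ℝ (Fin d) → ℝ) (hf : Measurable f)
    (Lf Mf : ℝ) (hLf : 0 ≤ Lf) (hMf : 0 ≤ Mf)
    (hfLip : ∀ x ∈ X, ∀ y ∈ X, |f x - f y| ≤ Lf * dist x y)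
    (hfBdd : ∀ x ∈ X, |f x| ≤ Mf)
    (hf0 : ∫ x, f x ∂μ = 0) :
    ∀ (k : ℕ) (n : ℕ), 1 ≤ n → ∀ t : ℝ, 0 < t →
      (μ {x | t < |(1 / (n : ℝ)) * ∑ i ∈ Finset.range n,
            f (T^[i] x) * f (T^[i + k] x)
          - ∫ z, f z * f (T^[k] z) ∂μ|}).toReal
        ≤ Cq * (2 * (Lf * Mf) / t) ^ q
            * (((n : ℝ) + (k : ℝ)) / (n : ℝ) ^ 2) ^ (q / 2) := by
  intro k n hn t ht
  obtain ⟨g, hgm, hgLip, hgeq, hgBdd⟩ := exists_ext X f Lf Mf hLf hMf hfLip hfBdd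
  -- iterates preserve the measure
  have hTi : ∀ i : ℕ, Measurable (T^[i]) := fun i => hT.iterate i
  have hmap : ∀ i : ℕ, μ.map (T^[i]) = μ := by
    intro i
    induction i with
    | zero => simp [Measure.map_id]
    | succ i ih =>
        rw [Function.iterate_succ, ← Measure.map_map (hTi i) hT, hinv, ih]
  -- orbits stay in X a.e.
  have hXm : MeasurableSet X := hX.isClosed.measurableSet
  have hpre : ∀ i : ℕ, μ ((T^[i]) ⁻¹' X)ᶜ = 0 := by
    intro i
    have h1 : μ ((T^[i]) ⁻¹' X) = 1 := by
      rw [← Measure.map_apply (hTi i) hXm, hmap i, hμX]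
    rw [measure_compl ((hXm.preimage (hTi i))) (measure_ne_top μ _), h1, measure_univ]
    simp
  set G : Set (EuclideanSpace ℝ (Fin d)) := ⋂ i : ℕ, (T^[i]) ⁻¹' X with hG
  have hGc : μ Gᶜ = 0 := by
    rw [hG, Set.compl_iInter]
    exact measure_iUnion_null fun i => hpre i
  have hGmem : ∀ x ∈ G, ∀ i : ℕ, T^[i] x ∈ X := by
    intro x hx i
    exact Set.mem_iInter.1 hx i
  -- the Z function
  set psi : EuclideanSpace ℝ (Fin d) → ℝ := fun w => g w * g (T^[k] w) with hpsi
  have hpsim : Measurable psi := hgm.mul (hgm.comp (hTi k))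
  have hphiInt : ∀ i : ℕ, Integrable (fun z => g (T^[i] z) * g (T^[i + k] z)) μ := by
    intro i
    refine Integrable.mono' (integrable_const (Mf * Mf))
      ((hgm.comp (hTi i)).mul (hgm.comp (hTi (i + k)))).aestronglyMeasurable
      (ae_of_all _ fun z => ?_)
    rw [Real.norm_eq_abs, abs_mul]
    exact mul_le_mul (hgBdd _) (hgBdd _) (abs_nonneg _) hMf
  have hstep : ∀ i : ℕ, ∫ z, g (T^[i] z) * g (T^[i + k] z) ∂μ = ∫ z, psi z ∂μ := by
    intro i
    have h1 : ∀ z, g (T^[i] z) * g (T^[i + k] z) = psi (T^[i] z) := by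
      intro z
      simp only [hpsi]
      rw [add_comm i k, Function.iterate_add_apply]
    calc ∫ z, g (T^[i] z) * g (T^[i + k] z) ∂μ = ∫ z, psi (T^[i] z) ∂μ := by
          simp only [h1]
      _ = ∫ w, psi w ∂(μ.map (T^[i])) :=
          (integral_map (hTi i).aemeasurable hpsim.aestronglyMeasurable).symm
      _ = ∫ w, psi w ∂μ := by rw [hmap i]
  set Z : EuclideanSpace ℝ (Fin d) → ℝ :=
    fun x => covK g n k (fun i => T^[(i : ℕ)] x) with hZdef
  have hZ : ∀ x, Z x = (n : ℝ)⁻¹ * ∑ i : Fin n, g (T^[(i:ℕ)] x) * g (T^[(i:ℕ) + k] x) :=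
    fun x => rfl
  have hnR : (0 : ℝ) < (n : ℝ) := by exact_mod_cast hn
  have hE0 : ∫ z, Z z ∂μ = ∫ z, psi z ∂μ := by
    calc ∫ z, Z z ∂μ
        = ∫ z, (n : ℝ)⁻¹ * ∑ i : Fin n, g (T^[(i:ℕ)] z) * g (T^[(i:ℕ) + k] z) ∂μ := by
          simp only [hZ]
      _ = (n : ℝ)⁻¹ * ∫ z, ∑ i : Fin n, g (T^[(i:ℕ)] z) * g (T^[(i:ℕ) + k] z) ∂μ :=
          integral_const_mul _ _
      _ = (n : ℝ)⁻¹ * ∑ i : Fin n, ∫ z, g (T^[(i:ℕ)] z) * g (T^[(i:ℕ) + k] z) ∂μ := by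
          congr 1
          exact integral_finset_sum Finset.univ fun i _ => hphiInt (i : ℕ)
      _ = (n : ℝ)⁻¹ * ∑ _i : Fin n, ∫ z, psi z ∂μ := by
          simp only [hstep]
      _ = ∫ z, psi z ∂μ := by
          rw [Finset.sum_const, Finset.card_univ, Fintype.card_fin, nsmul_eq_mul]
          field_simp
  have haeG : ∀ᵐ z ∂μ, z ∈ G := by
    rw [ae_iff]
    exact hGc
  have hc : ∫ z, f z * f (T^[k] z) ∂μ = ∫ z, psi z ∂μ := by
    refine integral_congr_ae ?_
    filter_upwards [haeG] with z hz
    have h0 : T^[0] z ∈ X := hGmem z hz 0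
    rw [Function.iterate_zero_apply] at h0
    simp only [hpsi]
    rw [hgeq _ h0, hgeq _ (hGmem z hz k)]
  -- the set inclusion
  set A := {x | t < |(1 / (n : ℝ)) * ∑ i ∈ Finset.range n,
      f (T^[i] x) * f (T^[i + k] x) - ∫ z, f z * f (T^[k] z) ∂μ|} with hA
  set B := {x | t < |Z x - ∫ z, Z z ∂μ|} with hB
  have hAB : A ∩ G ⊆ B := by
    rintro x ⟨hxA, hxG⟩
    rw [hA, Set.mem_setOf_eq] at hxA
    rw [hB, Set.mem_setOf_eq]
    have hsum : (1 / (n : ℝ)) * ∑ i ∈ Finset.range n,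
        f (T^[i] x) * f (T^[i + k] x) = Z x := by
      rw [hZ x, ← Fin.sum_univ_eq_sum_range (fun i => f (T^[i] x) * f (T^[i + k] x)) n,
        one_div]
      congr 1
      refine Finset.sum_congr rfl fun i _ => ?_
      rw [hgeq _ (hGmem x hxG (i : ℕ)), hgeq _ (hGmem x hxG ((i : ℕ) + k))]
    rwa [hsum, hc, ← hE0] at hxA
  have hμAB : μ A ≤ μ B := by
    calc μ A ≤ μ (B ∪ Gᶜ) := by
          refine measure_mono fun x hx => ?_
          by_cases hxG : x ∈ G
          · exact Or.inl (hAB ⟨hx, hxG⟩)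
          · exact Or.inr hxG
      _ ≤ μ B + μ Gᶜ := measure_union_le _ _
      _ = μ B := by rw [hGc, add_zero]
  -- Markov
  set W : EuclideanSpace ℝ (Fin d) → ℝ := fun x => Z x - ∫ z, Z z ∂μ with hW
  have hq0 : (0 : ℝ) ≤ q := by linarith
  have hZm : Measurable Z := by
    have : Measurable fun x => (n : ℝ)⁻¹ * ∑ i : Fin n, g (T^[(i:ℕ)] x) * g (T^[(i:ℕ) + k] x) :=
      (Finset.measurable_sum Finset.univ fun (i : Fin n) _ =>
        (hgm.comp (hTi (i : ℕ))).mul (hgm.comp (hTi ((i : ℕ) + k)))).const_mul _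
    exact this
  have hWm : Measurable W := hZm.sub measurable_const
  have hZbd : ∀ x, |Z x| ≤ Mf * Mf := by
    intro x
    rw [hZ x, abs_mul, abs_inv, Nat.abs_cast]
    calc (n : ℝ)⁻¹ * |∑ i : Fin n, g (T^[(i:ℕ)] x) * g (T^[(i:ℕ) + k] x)|
        ≤ (n : ℝ)⁻¹ * ∑ i : Fin n, (Mf * Mf) := by
          refine mul_le_mul_of_nonneg_left ?_ (by positivity)
          refine (Finset.abs_sum_le_sum_abs _ _).trans (Finset.sum_le_sum fun i _ => ?_)
          rw [abs_mul]
          exact mul_le_mul (hgBdd _) (hgBdd _) (abs_nonneg _) hMf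
      _ = Mf * Mf := by
          rw [Finset.sum_const, Finset.card_univ, Fintype.card_fin, nsmul_eq_mul]
          field_simp
  set R : ℝ := Mf * Mf + |∫ z, Z z ∂μ| with hR
  have hR0 : 0 ≤ R := by positivity
  have hWbd : ∀ x, |W x| ≤ R := by
    intro x
    rw [hW]
    calc |Z x - ∫ z, Z z ∂μ| ≤ |Z x| + |∫ z, Z z ∂μ| := abs_sub _ _
      _ ≤ R := by rw [hR]; linarith [hZbd x]
  have hWqInt : Integrable (fun x => |W x| ^ q) μ := by
    refine Integrable.mono' (integrable_const (R ^ q))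
      (hWm.abs.pow_const q).aestronglyMeasurable (ae_of_all _ fun x => ?_)
    rw [Real.norm_eq_abs, abs_of_nonneg (Real.rpow_nonneg (abs_nonneg _) q)]
    exact Real.rpow_le_rpow (abs_nonneg _) (hWbd x) hq0
  set tq : ℝ := t ^ q with htqdef
  have htq : 0 < tq := Real.rpow_pos_of_pos ht q
  have hBsub : B ⊆ {x | tq ≤ |W x| ^ q} := by
    intro x hx
    rw [hB, Set.mem_setOf_eq] at hx
    exact Real.rpow_le_rpow ht.le hx.le hq0
  have hmarkov : tq * (μ {x | tq ≤ |W x| ^ q}).toReal ≤ ∫ x, |W x| ^ q ∂μ :=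
    mul_meas_ge_le_integral_of_nonneg
      (ae_of_all _ fun x => Real.rpow_nonneg (abs_nonneg _) q) hWqInt tq
  -- concentration
  have hnk1 : 1 ≤ n + k := le_trans hn (Nat.le_add_right n k)
  have hsep := sepLip_covK g Lf Mf hLf hMf hgLip hgBdd n k
  have hconc' := hconc (n + k) hnk1 (covK g n k) (fun _ => 2 * (Lf * Mf) / n) hsep
  have hIq : ∫ x, |W x| ^ q ∂μ
      ≤ Cq * (∑ _j : Fin (n + k), (2 * (Lf * Mf) / (n:ℝ)) ^ 2) ^ (q / 2) := hconc'
  -- algebra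
  set w : ℝ := 2 * (Lf * Mf) with hwdef
  have hw0 : 0 ≤ w := by positivity
  have hSval : (∑ _j : Fin (n + k), (w / (n:ℝ)) ^ 2 : ℝ)
      = (((n : ℝ) + (k : ℝ)) / (n : ℝ) ^ 2) * w ^ 2 := by
    rw [Finset.sum_const, Finset.card_univ, Fintype.card_fin, nsmul_eq_mul]
    push_cast
    field_simp
  have hrpow : ((∑ _j : Fin (n + k), (w / (n:ℝ)) ^ 2 : ℝ)) ^ (q / 2)
      = (((n : ℝ) + (k : ℝ)) / (n : ℝ) ^ 2) ^ (q / 2) * w ^ q := by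
    have h2q : ((2 : ℕ) : ℝ) * (q / 2) = q := by push_cast; ring
    rw [hSval, Real.mul_rpow (by positivity) (by positivity),
      ← Real.rpow_natCast w 2, ← Real.rpow_mul hw0, h2q]
  -- putting everything together
  have hfinal : (μ A).toReal ≤ (Cq * ((((n : ℝ) + (k : ℝ)) / (n : ℝ) ^ 2) ^ (q / 2) * w ^ q)) / tq := by
    have h1 : (μ A).toReal ≤ (μ {x | tq ≤ |W x| ^ q}).toReal :=
      ENNReal.toReal_mono (measure_ne_top μ _) (hμAB.trans (measure_mono hBsub))
    have h2 : tq * (μ A).toReal ≤ Cq * ((((n : ℝ) + (k : ℝ)) / (n : ℝ) ^ 2) ^ (q / 2) * w ^ q) := by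
      calc tq * (μ A).toReal ≤ tq * (μ {x | tq ≤ |W x| ^ q}).toReal :=
            mul_le_mul_of_nonneg_left h1 htq.le
        _ ≤ ∫ x, |W x| ^ q ∂μ := hmarkov
        _ ≤ Cq * (∑ _j : Fin (n + k), (w / (n:ℝ)) ^ 2 : ℝ) ^ (q / 2) := hIq
        _ = Cq * ((((n : ℝ) + (k : ℝ)) / (n : ℝ) ^ 2) ^ (q / 2) * w ^ q) := by rw [hrpow]
    rw [le_div_iff₀ htq]
    linarith [h2]
  calc (μ A).toReal ≤ (Cq * ((((n : ℝ) + (k : ℝ)) / (n : ℝ) ^ 2) ^ (q / 2) * w ^ q)) / tq := hfinal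
    _ = Cq * (w / t) ^ q * (((n : ℝ) + (k : ℝ)) / (n : ℝ) ^ 2) ^ (q / 2) := by
        rw [Real.div_rpow hw0 ht.le, htqdef]
        field_simp

end
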